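/- Let s be C¹ on (0,1/16] with |s| ≤ 1/16 and |x·s'(x)| ≤ 1/16, and let f₁, f₂ be defined as before (difference quotients with diagonal values 2xs'(x)±s(x)). Define p⁺*(x,y) = √(xy)·[(1−√x)(1−√y) − f₁(x,y) + √(xy)·f₂(x,y)] / [(1−x)(1−y)(1+f₂(x,y))] for xy > 0 and p⁺*(x,y) = 0 if xy = 0. Then p⁺* is well defined (the denominator is nonzero), jointly continuous on [0,1/16]², and takes values in [0, 1/2]. -/

import Mathlib

open Real Set
open Filter

lemma dd_mvt {a : ℝ} {g g' : ℝ → ℝ}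
    (hg : ∀ u ∈ Ioc (0:ℝ) a, HasDerivAt g (g' u) u)
    {u v : ℝ} (hu : u ∈ Ioc (0:ℝ) a) (hv : v ∈ Ioc (0:ℝ) a) (huv : u ≠ v) :
    ∃ ξ, ξ ∈ Ioo (min u v) (max u v) ∧ ξ ∈ Ioc (0:ℝ) a ∧
      (g u - g v) / (u - v) = g' ξ := by
  have key : ∀ b c : ℝ, b ∈ Ioc (0:ℝ) a → c ∈ Ioc (0:ℝ) a → b < c →
      ∃ ξ ∈ Ioo b c, g' ξ = (g c - g b) / (c - b) := by
    intro b c hb hc hbc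
    apply exists_hasDerivAt_eq_slope g g' hbc
    · intro x hx
      exact (hg x ⟨lt_of_lt_of_le hb.1 hx.1, le_trans hx.2 hc.2⟩).continuousAt.continuousWithinAt
    · intro x hx
      exact hg x ⟨lt_trans hb.1 hx.1, (lt_of_lt_of_le hx.2 hc.2).le⟩
  rcases lt_or_gt_of_ne huv with h | h
  · obtain ⟨ξ, hξ, he⟩ := key u v hu hv h
    refine ⟨ξ, by simpa [min_eq_left h.le, max_eq_right h.le] using hξ,
      ⟨lt_trans hu.1 hξ.1, le_trans hξ.2.le hv.2⟩, ?_⟩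
    rw [he]; rw [div_eq_div_iff (sub_ne_zero.mpr huv) (sub_ne_zero.mpr (Ne.symm huv))]; ring
  · obtain ⟨ξ, hξ, he⟩ := key v u hv hu h
    exact ⟨ξ, by simpa [min_eq_right h.le, max_eq_left h.le] using hξ,
      ⟨lt_trans hv.1 hξ.1, le_trans hξ.2.le hu.2⟩, he.symm⟩

lemma dd_cont {a : ℝ} {g g' : ℝ → ℝ}
    (hg : ∀ u ∈ Ioc (0:ℝ) a, HasDerivAt g (g' u) u)
    (hg' : ContinuousOn g' (Ioc (0:ℝ) a)) :
    ContinuousOn (fun p : ℝ × ℝ =>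
      if p.1 = p.2 then g' p.1 else (g p.1 - g p.2) / (p.1 - p.2))
      (Ioc (0:ℝ) a ×ˢ Ioc (0:ℝ) a) := by
  set T := Ioc (0:ℝ) a ×ˢ Ioc (0:ℝ) a with hT
  intro p hp
  have hp1 : p.1 ∈ Ioc (0:ℝ) a := hp.1
  have hp2 : p.2 ∈ Ioc (0:ℝ) a := hp.2
  by_cases hd : p.1 = p.2
  · rw [Metric.continuousWithinAt_iff]
    intro ε hε
    obtain ⟨δ, hδ, hδ'⟩ := Metric.continuousWithinAt_iff.mp (hg' p.1 hp1) ε hε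
    refine ⟨δ, hδ, ?_⟩
    intro q hq hdist
    have hq1 : q.1 ∈ Ioc (0:ℝ) a := hq.1
    have hq2 : q.2 ∈ Ioc (0:ℝ) a := hq.2
    rw [Prod.dist_eq, max_lt_iff] at hdist
    have hd1 : dist q.1 p.1 < δ := hdist.1
    have hd2 : dist q.2 p.1 < δ := by have := hdist.2; rwa [hd]
    simp only [if_pos hd]
    by_cases hqd : q.1 = q.2
    · simp only [if_pos hqd]
      exact hδ' hq1 hd1
    · simp only [if_neg hqd]
      obtain ⟨ξ, hξm, hξI, he⟩ := dd_mvt hg hq1 hq2 hqd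
      rw [he]
      apply hδ' hξI
      rw [Real.dist_eq] at hd1 hd2 ⊢
      have h1 := abs_lt.mp hd1
      have h2 := abs_lt.mp hd2
      rw [abs_lt]
      rcases le_total q.1 q.2 with hle | hle
      · rw [min_eq_left hle, max_eq_right hle] at hξm
        exact ⟨by linarith [hξm.1], by linarith [hξm.2]⟩
      · rw [min_eq_right hle, max_eq_left hle] at hξm
        exact ⟨by linarith [hξm.1], by linarith [hξm.2]⟩
  · have hg_cont : ContinuousOn g (Ioc (0:ℝ) a) := fun u hu =>
      (hg u hu).continuousAt.continuousWithinAt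
    have hq : ContinuousWithinAt (fun q : ℝ × ℝ => (g q.1 - g q.2) / (q.1 - q.2)) T p := by
      apply ContinuousWithinAt.div
      · exact ((hg_cont.comp continuous_fst.continuousOn fun q hq => hq.1).sub
          (hg_cont.comp continuous_snd.continuousOn fun q hq => hq.2)) p hp
      · exact (continuous_fst.sub continuous_snd).continuousWithinAt
      · exact sub_ne_zero.mpr hd
    apply hq.congr_of_eventuallyEq _ (if_neg hd)
    have hU : {q : ℝ × ℝ | q.1 ≠ q.2} ∈ nhds p :=
      (isOpen_ne_fun continuous_fst continuous_snd).mem_nhds hd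
    filter_upwards [mem_nhdsWithin_of_mem_nhds hU] with q hq
    exact if_neg hq

lemma dd_bound {a M : ℝ} {g g' : ℝ → ℝ}
    (hg : ∀ u ∈ Ioc (0:ℝ) a, HasDerivAt g (g' u) u)
    (hM : ∀ u ∈ Ioc (0:ℝ) a, |g' u| ≤ M)
    {u v : ℝ} (hu : u ∈ Ioc (0:ℝ) a) (hv : v ∈ Ioc (0:ℝ) a) (huv : u ≠ v) :
    |(g u - g v) / (u - v)| ≤ M := by
  obtain ⟨ξ, _, hξ, he⟩ := dd_mvt hg hu hv huv
  rw [he]; exact hM ξ hξ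

theorem stmt_6 (s s' : ℝ → ℝ)
    (hderiv : ∀ x ∈ Set.Ioc (0:ℝ) (1/16), HasDerivAt s (s' x) x)
    (hcont : ContinuousOn s' (Set.Ioc (0:ℝ) (1/16)))
    (hs : ∀ x ∈ Set.Ioc (0:ℝ) (1/16), |s x| ≤ 1/16)
    (hs' : ∀ x ∈ Set.Ioc (0:ℝ) (1/16), |x * s' x| ≤ 1/16)
    (f₁ f₂ : ℝ → ℝ → ℝ)
    (hf₁ : ∀ x ∈ Set.Ioc (0:ℝ) (1/16), ∀ y ∈ Set.Ioc (0:ℝ) (1/16), x ≠ y →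
      f₁ x y = (Real.sqrt x * s x - Real.sqrt y * s y) / (Real.sqrt x - Real.sqrt y))
    (hf₁diag : ∀ x ∈ Set.Ioc (0:ℝ) (1/16), f₁ x x = 2 * x * s' x + s x)
    (hf₂ : ∀ x ∈ Set.Ioc (0:ℝ) (1/16), ∀ y ∈ Set.Ioc (0:ℝ) (1/16), x ≠ y →
      f₂ x y = (Real.sqrt y * s x - Real.sqrt x * s y) / (Real.sqrt x - Real.sqrt y))
    (hf₂diag : ∀ x ∈ Set.Ioc (0:ℝ) (1/16), f₂ x x = 2 * x * s' x - s x)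
    (pstar : ℝ → ℝ → ℝ)
    (hp : ∀ x ∈ Set.Icc (0:ℝ) (1/16), ∀ y ∈ Set.Icc (0:ℝ) (1/16), 0 < x * y →
      pstar x y = Real.sqrt (x*y) *
          ((1 - Real.sqrt x) * (1 - Real.sqrt y) - f₁ x y + Real.sqrt (x*y) * f₂ x y) /
        ((1 - x) * (1 - y) * (1 + f₂ x y)))
    (hp0 : ∀ x ∈ Set.Icc (0:ℝ) (1/16), ∀ y ∈ Set.Icc (0:ℝ) (1/16), x * y = 0 →
      pstar x y = 0) :
    (∀ x ∈ Set.Icc (0:ℝ) (1/16), ∀ y ∈ Set.Icc (0:ℝ) (1/16), 0 < x * y →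
        (1 - x) * (1 - y) * (1 + f₂ x y) ≠ 0) ∧
    ContinuousOn (fun p : ℝ × ℝ => pstar p.1 p.2)
      (Set.Icc (0:ℝ) (1/16) ×ˢ Set.Icc (0:ℝ) (1/16)) ∧
    (∀ x ∈ Set.Icc (0:ℝ) (1/16), ∀ y ∈ Set.Icc (0:ℝ) (1/16),
        pstar x y ∈ Set.Icc (0:ℝ) (1/2)) := by
  -- setup
  set G : ℝ → ℝ := fun u => u * s (u ^ 2) with hGdef
  set G' : ℝ → ℝ := fun u => s (u ^ 2) + 2 * u ^ 2 * s' (u ^ 2) with hG'def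
  have hmap : ∀ u ∈ Ioc (0:ℝ) (1/4), u ^ 2 ∈ Ioc (0:ℝ) (1/16) := by
    intro u hu
    exact ⟨pow_pos hu.1 2, by nlinarith [hu.1, hu.2]⟩
  have hG : ∀ u ∈ Ioc (0:ℝ) (1/4), HasDerivAt G (G' u) u := by
    intro u hu
    have h1 : HasDerivAt (fun w : ℝ => w ^ 2) (2 * u) u := by
      simpa using hasDerivAt_pow 2 u
    have h2 : HasDerivAt (fun w : ℝ => s (w ^ 2)) (s' (u ^ 2) * (2 * u)) u :=
      HasDerivAt.comp u (hderiv _ (hmap u hu)) h1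
    have h3 : HasDerivAt (fun w => w * s (w ^ 2)) (1 * s (u ^ 2) + id u * (s' (u ^ 2) * (2 * u))) u :=
      (hasDerivAt_id u).mul h2
    convert h3 using 1
    simp [hG'def]; ring
  have hscont : ContinuousOn s (Ioc (0:ℝ) (1/16)) := fun x hx =>
    (hderiv x hx).continuousAt.continuousWithinAt
  have hmapsTo : MapsTo (fun u : ℝ => u ^ 2) (Ioc (0:ℝ) (1/4)) (Ioc (0:ℝ) (1/16)) := hmap
  have hG'cont : ContinuousOn G' (Ioc (0:ℝ) (1/4)) := by
    apply ContinuousOn.add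
    · exact hscont.comp (continuous_pow 2).continuousOn hmapsTo
    · exact ((continuous_const.mul (continuous_pow 2)).continuousOn).mul
        (hcont.comp (continuous_pow 2).continuousOn hmapsTo)
  have hG'bound : ∀ u ∈ Ioc (0:ℝ) (1/4), |G' u| ≤ 3/16 := by
    intro u hu
    have h1 := hs _ (hmap u hu)
    have h2 := hs' _ (hmap u hu)
    have := abs_add_le (s (u ^ 2)) (2 * u ^ 2 * s' (u ^ 2))
    have h3 : |2 * u ^ 2 * s' (u ^ 2)| = 2 * |u ^ 2 * s' (u ^ 2)| := by
      rw [mul_assoc, abs_mul]; simp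
    simp only [hG'def]
    calc |s (u ^ 2) + 2 * u ^ 2 * s' (u ^ 2)|
        ≤ |s (u ^ 2)| + |2 * u ^ 2 * s' (u ^ 2)| := abs_add_le _ _
      _ ≤ 1/16 + 2 * (1/16) := by rw [h3]; gcongr
      _ = 3/16 := by norm_num
  -- sqrt facts
  have hsqrtmem : ∀ x ∈ Ioc (0:ℝ) (1/16), Real.sqrt x ∈ Ioc (0:ℝ) (1/4) := by
    intro x hx
    refine ⟨Real.sqrt_pos.mpr hx.1, ?_⟩
    have : Real.sqrt x ≤ Real.sqrt (1/16) := Real.sqrt_le_sqrt hx.2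
    rwa [show (1/16:ℝ) = (1/4)^2 by norm_num, Real.sqrt_sq (by norm_num)] at this
  have hsq : ∀ x ∈ Ioc (0:ℝ) (1/16), (Real.sqrt x) ^ 2 = x := fun x hx =>
    Real.sq_sqrt hx.1.le
  set D : ℝ × ℝ → ℝ := fun p => if p.1 = p.2 then G' p.1 else (G p.1 - G p.2) / (p.1 - p.2)
    with hDdef
  have hf1eq : ∀ x ∈ Ioc (0:ℝ) (1/16), ∀ y ∈ Ioc (0:ℝ) (1/16),
      f₁ x y = D (Real.sqrt x, Real.sqrt y) := by
    intro x hx y hy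
    by_cases hxy : x = y
    · subst hxy
      simp only [hDdef, if_pos rfl, hG'def]
      rw [hf₁diag x hx, hsq x hx]
      ring
    · have hne : Real.sqrt x ≠ Real.sqrt y := fun h =>
        hxy (by rw [← hsq x hx, ← hsq y hy, h])
      simp only [hDdef, if_neg hne, hGdef]
      rw [hf₁ x hx y hy hxy, hsq x hx, hsq y hy]
  have hf1bound : ∀ x ∈ Ioc (0:ℝ) (1/16), ∀ y ∈ Ioc (0:ℝ) (1/16), |f₁ x y| ≤ 3/16 := by
    intro x hx y hy
    rw [hf1eq x hx y hy]
    by_cases h : Real.sqrt x = Real.sqrt y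
    · simp only [hDdef, if_pos h]
      exact hG'bound _ (hsqrtmem x hx)
    · simp only [hDdef, if_neg h]
      exact dd_bound hG hG'bound (hsqrtmem x hx) (hsqrtmem y hy) h
  have hf2eq : ∀ x ∈ Ioc (0:ℝ) (1/16), ∀ y ∈ Ioc (0:ℝ) (1/16),
      f₂ x y = f₁ x y - s x - s y := by
    intro x hx y hy
    by_cases hxy : x = y
    · subst hxy; rw [hf₂diag x hx, hf₁diag x hx]; ring
    · have hne : Real.sqrt x ≠ Real.sqrt y := fun h =>
        hxy (by rw [← hsq x hx, ← hsq y hy, h])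
      rw [hf₂ x hx y hy hxy, hf₁ x hx y hy hxy]
      field_simp [sub_ne_zero.mpr hne]
      ring
  have hf2bound : ∀ x ∈ Ioc (0:ℝ) (1/16), ∀ y ∈ Ioc (0:ℝ) (1/16), |f₂ x y| ≤ 5/16 := by
    intro x hx y hy
    have h1 := abs_le.mp (hf1bound x hx y hy)
    have h2 := abs_le.mp (hs x hx)
    have h3 := abs_le.mp (hs y hy)
    rw [hf2eq x hx y hy, abs_le]
    constructor <;> linarith
  -- membership upgrade
  have hIoc : ∀ x ∈ Icc (0:ℝ) (1/16), ∀ y ∈ Icc (0:ℝ) (1/16), 0 < x * y →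
      x ∈ Ioc (0:ℝ) (1/16) ∧ y ∈ Ioc (0:ℝ) (1/16) := by
    intro x hx y hy hxy
    have hx0 : 0 < x := by
      rcases hx.1.lt_or_eq with h | h
      · exact h
      · exfalso; rw [← h] at hxy; simp at hxy
    have hy0 : 0 < y := by
      rcases hy.1.lt_or_eq with h | h
      · exact h
      · exfalso; rw [← h] at hxy; simp at hxy
    exact ⟨⟨hx0, hx.2⟩, ⟨hy0, hy.2⟩⟩
  -- denominator bound
  have hden : ∀ x ∈ Ioc (0:ℝ) (1/16), ∀ y ∈ Ioc (0:ℝ) (1/16),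
      2475/4096 ≤ (1 - x) * (1 - y) * (1 + f₂ x y) := by
    intro x hx y hy
    have hA : (15:ℝ)/16 ≤ 1 - x := by linarith [hx.2]
    have hB : (15:ℝ)/16 ≤ 1 - y := by linarith [hy.2]
    have hC : (11:ℝ)/16 ≤ 1 + f₂ x y := by
      linarith [(abs_le.mp (hf2bound x hx y hy)).1]
    have h1 : (15:ℝ)/16 * (15/16) ≤ (1 - x) * (1 - y) :=
      mul_le_mul hA hB (by norm_num) (by linarith)
    have h2 : ((15:ℝ)/16 * (15/16)) * (11/16) ≤ ((1 - x) * (1 - y)) * (1 + f₂ x y) :=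
      mul_le_mul h1 hC (by norm_num) (by nlinarith)
    linarith
  -- numerator bounds
  have hnum : ∀ x ∈ Ioc (0:ℝ) (1/16), ∀ y ∈ Ioc (0:ℝ) (1/16),
      91/256 ≤ (1 - Real.sqrt x) * (1 - Real.sqrt y) - f₁ x y +
          Real.sqrt (x*y) * f₂ x y ∧
      (1 - Real.sqrt x) * (1 - Real.sqrt y) - f₁ x y +
          Real.sqrt (x*y) * f₂ x y ≤ 309/256 := by
    intro x hx y hy
    have ha := hsqrtmem x hx
    have hb := hsqrtmem y hy
    have hr : Real.sqrt (x*y) = Real.sqrt x * Real.sqrt y := Real.sqrt_mul hx.1.le y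
    have hab0 : 0 < Real.sqrt x * Real.sqrt y := mul_pos ha.1 hb.1
    have hab : Real.sqrt x * Real.sqrt y ≤ 1/16 := by nlinarith [ha.2, hb.2, ha.1, hb.1]
    have h1 := abs_le.mp (hf1bound x hx y hy)
    have habf : |Real.sqrt x * Real.sqrt y * f₂ x y| ≤ 1/16 * (5/16) := by
      rw [abs_mul, abs_of_pos hab0]
      exact mul_le_mul hab (hf2bound x hx y hy) (abs_nonneg _) (by norm_num)
    have h2 := abs_le.mp habf
    have hprod : (9:ℝ)/16 ≤ (1 - Real.sqrt x) * (1 - Real.sqrt y) := by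
      nlinarith [mul_nonneg (by linarith [ha.2] : (0:ℝ) ≤ 1/4 - Real.sqrt x)
        (by linarith [hb.2] : (0:ℝ) ≤ 1/4 - Real.sqrt y)]
    have hprod2 : (1 - Real.sqrt x) * (1 - Real.sqrt y) ≤ 1 := by
      nlinarith [ha.1, hb.1, hab0]
    rw [hr]
    constructor <;> linarith
  -- key values
  have hkey : ∀ x ∈ Icc (0:ℝ) (1/16), ∀ y ∈ Icc (0:ℝ) (1/16), 0 < x * y →
      0 ≤ pstar x y ∧ pstar x y ≤ 1/2 ∧ pstar x y ≤ 3 * Real.sqrt (x*y) := by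
    intro x hx y hy hxy
    obtain ⟨hx', hy'⟩ := hIoc x hx y hy hxy
    rw [hp x hx y hy hxy]
    set r := Real.sqrt (x*y) with hrdef
    have hr0 : 0 < r := Real.sqrt_pos.mpr hxy
    have hr1 : r ≤ 1/16 := by
      have : r ≤ Real.sqrt (1/256) := Real.sqrt_le_sqrt (by nlinarith [hx'.2, hy'.2, hx'.1, hy'.1])
      rwa [show (1/256:ℝ) = (1/16)^2 by norm_num, Real.sqrt_sq (by norm_num)] at this
    obtain ⟨hN1, hN2⟩ := hnum x hx' y hy'
    have hD1 := hden x hx' y hy'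
    set N := (1 - Real.sqrt x) * (1 - Real.sqrt y) - f₁ x y + r * f₂ x y with hNdef
    set Dd := (1 - x) * (1 - y) * (1 + f₂ x y) with hDddef
    have hD0 : 0 < Dd := by linarith
    refine ⟨?_, ?_, ?_⟩
    · apply div_nonneg _ hD0.le
      exact mul_nonneg hr0.le (by linarith)
    · rw [div_le_iff₀ hD0]
      have : r * N ≤ 1/16 * (309/256) := mul_le_mul hr1 hN2 (by linarith) (by norm_num)
      nlinarith
    · rw [div_le_iff₀ hD0]
      have : 0 ≤ r * (3 * Dd - N) := mul_nonneg hr0.le (by nlinarith)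
      nlinarith
  refine ⟨?_, ?_, ?_⟩
  · intro x hx y hy hxy
    obtain ⟨hx', hy'⟩ := hIoc x hx y hy hxy
    have := hden x hx' y hy'
    positivity
  · -- continuity
    set S := Icc (0:ℝ) (1/16) ×ˢ Icc (0:ℝ) (1/16) with hSdef
    set T := Ioc (0:ℝ) (1/16) ×ˢ Ioc (0:ℝ) (1/16) with hTdef
    have hST : S ∩ (Ioi (0:ℝ) ×ˢ Ioi (0:ℝ)) = T := by
      ext q
      simp only [hSdef, hTdef, mem_inter_iff, mem_prod, mem_Icc, mem_Ioc, mem_Ioi]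
      constructor
      · rintro ⟨⟨⟨_, h2⟩, ⟨_, h4⟩⟩, h5, h6⟩; exact ⟨⟨h5, h2⟩, h6, h4⟩
      · rintro ⟨⟨h1, h2⟩, h3, h4⟩; exact ⟨⟨⟨h1.le, h2⟩, h3.le, h4⟩, h1, h3⟩
    -- continuity of f₁, f₂ on T
    have hsqrtcont : Continuous (fun q : ℝ × ℝ => (Real.sqrt q.1, Real.sqrt q.2)) :=
      (Real.continuous_sqrt.comp continuous_fst).prodMk
        (Real.continuous_sqrt.comp continuous_snd)
    have hmapT : MapsTo (fun q : ℝ × ℝ => (Real.sqrt q.1, Real.sqrt q.2)) T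
        (Ioc (0:ℝ) (1/4) ×ˢ Ioc (0:ℝ) (1/4)) := by
      intro q hq
      exact ⟨hsqrtmem q.1 hq.1, hsqrtmem q.2 hq.2⟩
    have hf1cont : ContinuousOn (fun q : ℝ × ℝ => f₁ q.1 q.2) T := by
      apply ContinuousOn.congr (((dd_cont hG hG'cont).comp hsqrtcont.continuousOn hmapT))
      intro q hq
      exact hf1eq q.1 hq.1 q.2 hq.2
    have hf2cont : ContinuousOn (fun q : ℝ × ℝ => f₂ q.1 q.2) T := by
      apply ContinuousOn.congr
        ((hf1cont.sub (hscont.comp continuous_fst.continuousOn fun q hq => hq.1)).sub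
          (hscont.comp continuous_snd.continuousOn fun q hq => hq.2))
      intro q hq
      exact hf2eq q.1 hq.1 q.2 hq.2
    intro p hpS
    have hp1 : p.1 ∈ Icc (0:ℝ) (1/16) := hpS.1
    have hp2 : p.2 ∈ Icc (0:ℝ) (1/16) := hpS.2
    by_cases hxy : 0 < p.1 * p.2
    · -- interior case
      have hpT : p ∈ T := by
        rw [← hST]
        obtain ⟨h1, h2⟩ := hIoc p.1 hp1 p.2 hp2 hxy
        exact ⟨hpS, h1.1, h2.1⟩
      have hF : ContinuousWithinAt (fun q : ℝ × ℝ =>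
          Real.sqrt (q.1 * q.2) *
            ((1 - Real.sqrt q.1) * (1 - Real.sqrt q.2) - f₁ q.1 q.2 +
              Real.sqrt (q.1 * q.2) * f₂ q.1 q.2) /
          ((1 - q.1) * (1 - q.2) * (1 + f₂ q.1 q.2))) T p := by
        apply ContinuousWithinAt.div
        · apply ContinuousWithinAt.mul
          · exact (Real.continuous_sqrt.comp (continuous_fst.mul continuous_snd)).continuousWithinAt
          · apply ContinuousWithinAt.add
            · apply ContinuousWithinAt.sub
              · exact (((continuous_const.sub (Real.continuous_sqrt.comp continuous_fst)).mul
                  (continuous_const.sub (Real.continuous_sqrt.comp continuous_snd)))).continuousWithinAt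
              · exact hf1cont p hpT
            · exact ((Real.continuous_sqrt.comp
                (continuous_fst.mul continuous_snd)).continuousWithinAt).mul (hf2cont p hpT)
        · exact (((continuous_const.sub continuous_fst).mul
            (continuous_const.sub continuous_snd)).continuousWithinAt).mul
            ((continuous_const.continuousWithinAt).add (hf2cont p hpT))
        · obtain ⟨h1, h2⟩ := hIoc p.1 hp1 p.2 hp2 hxy
          have := hden p.1 h1 p.2 h2
          positivity
      have hEq : ContinuousWithinAt (fun q : ℝ × ℝ => pstar q.1 q.2) T p := by
        apply hF.congr _ (hp p.1 hp1 p.2 hp2 hxy)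
        intro q hq
        have hq1 : q.1 ∈ Icc (0:ℝ) (1/16) := ⟨hq.1.1.le, hq.1.2⟩
        have hq2 : q.2 ∈ Icc (0:ℝ) (1/16) := ⟨hq.2.1.le, hq.2.2⟩
        exact hp q.1 hq1 q.2 hq2 (mul_pos hq.1.1 hq.2.1)
      rw [← hST] at hEq
      have hU : (Ioi (0:ℝ) ×ˢ Ioi (0:ℝ)) ∈ nhds p := by
        apply IsOpen.mem_nhds (isOpen_Ioi.prod isOpen_Ioi)
        obtain ⟨h1, h2⟩ := hIoc p.1 hp1 p.2 hp2 hxy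
        exact ⟨h1.1, h2.1⟩
      exact (continuousWithinAt_inter hU).mp hEq
    · -- boundary case
      have hxy0 : p.1 * p.2 = 0 := by
        have := mul_nonneg hp1.1 hp2.1
        rcases this.lt_or_eq with h | h
        · exact absurd h hxy
        · exact h.symm
      have hbound : ∀ q ∈ S, |pstar q.1 q.2| ≤ 3 * Real.sqrt (q.1 * q.2) := by
        intro q hq
        have hq1 : q.1 ∈ Icc (0:ℝ) (1/16) := hq.1
        have hq2 : q.2 ∈ Icc (0:ℝ) (1/16) := hq.2
        rcases (mul_nonneg hq1.1 hq2.1).lt_or_eq with h | h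
        · obtain ⟨h1, h2, h3⟩ := hkey q.1 hq1 q.2 hq2 h
          rw [abs_of_nonneg h1]; exact h3
        · rw [hp0 q.1 hq1 q.2 hq2 h.symm]
          simp [Real.sqrt_nonneg]
      have hlim : Tendsto (fun q : ℝ × ℝ => 3 * Real.sqrt (q.1 * q.2)) (nhdsWithin p S)
          (nhds 0) := by
        have hc : Continuous (fun q : ℝ × ℝ => 3 * Real.sqrt (q.1 * q.2)) :=
          continuous_const.mul (Real.continuous_sqrt.comp (continuous_fst.mul continuous_snd))
        have := (hc.continuousAt (x := p)).continuousWithinAt (s := S)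
        have h0 : 3 * Real.sqrt (p.1 * p.2) = 0 := by rw [hxy0]; simp
        rw [ContinuousWithinAt, h0] at this
        exact this
      have hval : pstar p.1 p.2 = 0 := hp0 p.1 hp1 p.2 hp2 hxy0
      have hnonneg : ∀ᶠ q : ℝ × ℝ in nhdsWithin p S, 0 ≤ pstar q.1 q.2 := by
        filter_upwards [self_mem_nhdsWithin] with q hq
        have hq1 : q.1 ∈ Icc (0:ℝ) (1/16) := hq.1
        have hq2 : q.2 ∈ Icc (0:ℝ) (1/16) := hq.2
        rcases (mul_nonneg hq1.1 hq2.1).lt_or_eq with h | h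
        · exact (hkey q.1 hq1 q.2 hq2 h).1
        · rw [hp0 q.1 hq1 q.2 hq2 h.symm]
      have hub : ∀ᶠ q : ℝ × ℝ in nhdsWithin p S,
          pstar q.1 q.2 ≤ 3 * Real.sqrt (q.1 * q.2) := by
        filter_upwards [self_mem_nhdsWithin] with q hq
        exact le_of_abs_le (hbound q hq)
      have htends : Tendsto (fun q : ℝ × ℝ => pstar q.1 q.2) (nhdsWithin p S) (nhds 0) :=
        squeeze_zero' hnonneg hub hlim
      rw [show (0:ℝ) = pstar p.1 p.2 from hval.symm] at htends
      exact htends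
  · intro x hx y hy
    rcases (mul_nonneg hx.1 hy.1).lt_or_eq with h | h
    · obtain ⟨h1, h2, _⟩ := hkey x hx y hy h
      exact ⟨h1, h2⟩
    · rw [hp0 x hx y hy h.symm]
      constructor <;> norm_num
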